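/- arXiv:2010.02280 — 7 statements merged into one kernel-verified Lean document; each statement's English description precedes it below -/
import Mathlib

section
/- Let n ≥ 2, let H be a symmetric positive definite n×n real matrix, c ∈ ℝⁿ, and w ∈ ℝⁿ with w ≠ 0. Define c⁺ = c − (1/(n+1))·Hw/√(⟨w, Hw⟩) and H⁺ = (n²/(n²−1))·(H − (2/(n+1))·(Hw)(Hw)ᵀ/⟨w, Hw⟩). Then H⁺ is symmetric positive definite and the half-ellipsoid {x ∈ E(c,H) : ⟨w, x − c⟩ ≤ 0} is contained in the ellipsoid E(c⁺, H⁺). -/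
open Matrix

private lemma key_ineq (N q t r k : ℝ) (hN : 2 ≤ N) (hr : 0 < r) (hq : q ≤ 1) (ht : t ≤ 0)
    (hcs : t^2 ≤ r^2*q) (hk : k = 1/((N+1)*r)) :
    (N^2/(N^2-1))⁻¹ * (q + 2*(k*t) + k^2*r^2
      + (2/((N-1)*r^2))*(t + k*r^2)^2) ≤ 1 := by
  subst hk
  have h1 : -r ≤ t := by nlinarith
  have hN1 : (0:ℝ) < N - 1 := by linarith
  have hN2 : (0:ℝ) < N + 1 := by linarith
  have hNN : (0:ℝ) < N ^ 2 - 1 := by nlinarith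
  rw [inv_div, div_mul_eq_mul_div, div_le_one (by positivity)]
  have key : (N ^ 2 - 1) * (q + 2*((1/((N+1)*r))*t) + (1/((N+1)*r))^2*r^2
      + (2/((N-1)*r^2))*(t + (1/((N+1)*r))*r^2)^2)
      = N^2 - ((N^2-1)*(1-q) + 2*(N+1)*((-t/r)*(1+t/r))) := by
    field_simp
    ring
  rw [key]
  have h2 : 0 ≤ (N^2-1)*(1-q) := by nlinarith
  have h3 : 0 ≤ 2*(N+1)*((-t/r)*(1+t/r)) := by
    have hu : -1 ≤ t/r := by
      rw [neg_le, ← neg_div]; exact div_le_one_of_le₀ (by linarith) hr.le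
    apply mul_nonneg (by linarith)
    exact mul_nonneg (div_nonneg (by linarith) hr.le) (by linarith)
  linarith

set_option maxHeartbeats 2000000 in
/-- one step of the ellipsoid method: the half-ellipsoid
`{x ∈ E(c,H) : ⟨w, x − c⟩ ≤ 0}` is contained in the ellipsoid `E(c⁺, H⁺)`,
and `H⁺` is symmetric positive definite. -/
theorem ellipsoid_step_containment (n : ℕ) (hn : 2 ≤ n)
    (H : Matrix (Fin n) (Fin n) ℝ) (hH : H.PosDef)
    (c w : Fin n → ℝ) (hw : w ≠ 0) :
    (((n : ℝ) ^ 2 / ((n : ℝ) ^ 2 - 1)) •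
        (H - ((2 : ℝ) / ((n : ℝ) + 1)) •
          ((w ⬝ᵥ (H *ᵥ w))⁻¹ • vecMulVec (H *ᵥ w) (H *ᵥ w)))).PosDef ∧
    ∀ x : Fin n → ℝ,
      (H⁻¹ *ᵥ (x - c)) ⬝ᵥ (x - c) ≤ 1 → w ⬝ᵥ (x - c) ≤ 0 →
      ((((n : ℝ) ^ 2 / ((n : ℝ) ^ 2 - 1)) •
          (H - ((2 : ℝ) / ((n : ℝ) + 1)) •
            ((w ⬝ᵥ (H *ᵥ w))⁻¹ • vecMulVec (H *ᵥ w) (H *ᵥ w))))⁻¹ *ᵥ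
        (x - (c - ((1 : ℝ) / ((n : ℝ) + 1)) •
          ((Real.sqrt (w ⬝ᵥ (H *ᵥ w)))⁻¹ • (H *ᵥ w))))) ⬝ᵥ
        (x - (c - ((1 : ℝ) / ((n : ℝ) + 1)) •
          ((Real.sqrt (w ⬝ᵥ (H *ᵥ w)))⁻¹ • (H *ᵥ w)))) ≤ 1 := by
  have hN : (2:ℝ) ≤ (n:ℝ) := by exact_mod_cast hn
  set N : ℝ := (n:ℝ) with hNdef
  set a : Fin n → ℝ := H *ᵥ w with ha
  set s : ℝ := w ⬝ᵥ a with hsdef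
  have hs : 0 < s := by simpa [hsdef, ha] using hH.dotProduct_mulVec_pos hw
  have hs0 : s ≠ 0 := hs.ne'
  have hN1 : (0:ℝ) < N - 1 := by linarith
  have hN2 : (0:ℝ) < N + 1 := by linarith
  have hNN : (0:ℝ) < N^2 - 1 := by nlinarith
  have hτpos : (0:ℝ) < N^2/(N^2-1) := by positivity
  have hdet : IsUnit H.det := isUnit_iff_ne_zero.mpr hH.det_pos.ne'
  have hHinvA : H⁻¹ *ᵥ a = w := by
    rw [ha, mulVec_mulVec, nonsing_inv_mul H hdet, one_mulVec]
  have hHA : ∀ v : Fin n → ℝ, H *ᵥ (H⁻¹ *ᵥ v) = v := fun v => by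
    rw [mulVec_mulVec, mul_nonsing_inv H hdet, one_mulVec]
  have hswap : ∀ u v : Fin n → ℝ, (H⁻¹ *ᵥ u) ⬝ᵥ v = u ⬝ᵥ (H⁻¹ *ᵥ v) := fun u v => by
    rw [dotProduct_comm, dotProduct_mulVec, ← mulVec_transpose,
      show H⁻¹ᵀ = H⁻¹ from hH.inv.1, dotProduct_comm]
  have hswapH : ∀ u v : Fin n → ℝ, (H *ᵥ u) ⬝ᵥ v = u ⬝ᵥ (H *ᵥ v) := fun u v => by
    rw [dotProduct_comm, dotProduct_mulVec, ← mulVec_transpose,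
      show Hᵀ = H from hH.1, dotProduct_comm]
  have hVmul : ∀ v : Fin n → ℝ, vecMulVec a a *ᵥ v = (a ⬝ᵥ v) • a := fun v => by
    ext i
    simp [vecMulVec_apply, mulVec, dotProduct, Finset.mul_sum, mul_comm, mul_assoc, mul_left_comm]
  -- Cauchy–Schwarz type bounds
  have hCS : ∀ v : Fin n → ℝ, (a ⬝ᵥ v)^2 ≤ s * (v ⬝ᵥ (H *ᵥ v)) := by
    intro v
    have h0 : 0 ≤ (s • v - (a ⬝ᵥ v) • w) ⬝ᵥ (H *ᵥ (s • v - (a ⬝ᵥ v) • w)) := by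
      simpa using hH.posSemidef.dotProduct_mulVec_nonneg (s • v - (a ⬝ᵥ v) • w)
    rw [mulVec_sub, mulVec_smul, mulVec_smul, ← ha] at h0
    simp only [sub_dotProduct, dotProduct_sub, smul_dotProduct, dotProduct_smul,
      smul_eq_mul] at h0
    rw [← hswapH w v, ← ha, dotProduct_comm v a, ← hsdef] at h0
    nlinarith [h0, hs]
  have hCS2 : ∀ v : Fin n → ℝ, (w ⬝ᵥ v)^2 ≤ s * ((H⁻¹ *ᵥ v) ⬝ᵥ v) := by
    intro v
    have h0 : 0 ≤ (s • v - (w ⬝ᵥ v) • a) ⬝ᵥ (H⁻¹ *ᵥ (s • v - (w ⬝ᵥ v) • a)) := by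
      simpa using hH.inv.posSemidef.dotProduct_mulVec_nonneg (s • v - (w ⬝ᵥ v) • a)
    rw [mulVec_sub, mulVec_smul, mulVec_smul, hHinvA] at h0
    simp only [sub_dotProduct, dotProduct_sub, smul_dotProduct, dotProduct_smul,
      smul_eq_mul] at h0
    rw [← hswap a v, hHinvA, dotProduct_comm v w] at h0
    rw [dotProduct_comm a w, ← hsdef, dotProduct_comm v (H⁻¹ *ᵥ v)] at h0
    nlinarith [h0, hs]
  set Hp : Matrix (Fin n) (Fin n) ℝ :=
    (N^2/(N^2-1)) • (H - (2/(N+1)) • (s⁻¹ • vecMulVec a a)) with hHp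
  have hPD : Hp.PosDef := by
    refine posDef_iff_dotProduct_mulVec.mpr ⟨?_, ?_⟩
    · show Hpᴴ = Hp
      have hV : (vecMulVec a a).IsHermitian := by
        ext i j; simp [vecMulVec_apply, mul_comm]
      rw [hHp, conjTranspose_smul, conjTranspose_sub, conjTranspose_smul,
        conjTranspose_smul, hH.1, hV, star_trivial, star_trivial, star_trivial]
    · intro x hx
      have hx' : 0 < x ⬝ᵥ (H *ᵥ x) := by simpa using hH.dotProduct_mulVec_pos hx
      have hcs := hCS x
      have hσ1 : (0:ℝ) < 2/(N+1) := by positivity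
      have hσ2 : 2/(N+1) < 1 := by rw [div_lt_one hN2]; linarith
      have h4 : s⁻¹ * (a ⬝ᵥ x)^2 ≤ x ⬝ᵥ (H *ᵥ x) := by
        rw [inv_mul_le_iff₀ hs]; linarith [hcs]
      have : star x ⬝ᵥ (Hp *ᵥ x) =
          (N^2/(N^2-1)) * (x ⬝ᵥ (H *ᵥ x) - 2/(N+1) * (s⁻¹ * ((a ⬝ᵥ x) * (x ⬝ᵥ a)))) := by
        rw [star_trivial, hHp, smul_mulVec, sub_mulVec, smul_mulVec,
          smul_mulVec, hVmul]
        simp only [dotProduct_smul, dotProduct_sub, smul_eq_mul]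
      rw [this, dotProduct_comm x a]
      have h5 : 0 < x ⬝ᵥ (H *ᵥ x) - 2/(N+1) * (s⁻¹ * ((a ⬝ᵥ x) * (a ⬝ᵥ x))) := by
        nlinarith [h4, hx', hσ1, hσ2, sq_nonneg (a ⬝ᵥ x)]
      exact mul_pos hτpos h5
  refine ⟨hPD, ?_⟩
  intro x hq1 ht1
  have hdetp : IsUnit Hp.det := isUnit_iff_ne_zero.mpr hPD.det_pos.ne'
  set r : ℝ := Real.sqrt s with hrdef
  have hr : 0 < r := Real.sqrt_pos.mpr hs
  have hr2 : r^2 = s := Real.sq_sqrt hs.le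
  set y : Fin n → ℝ := x - c with hy
  set k : ℝ := (1/(N+1)) * r⁻¹ with hk
  have hyp : x - (c - (1/(N+1)) • (r⁻¹ • a)) = y + k • a := by
    rw [smul_smul, ← hk, hy]; ext i; simp; ring
  rw [hyp]
  set yp : Fin n → ℝ := y + k • a with hypdef
  set t : ℝ := w ⬝ᵥ y with htdef
  set q : ℝ := (H⁻¹ *ᵥ y) ⬝ᵥ y with hqdef
  have hwyp : w ⬝ᵥ yp = t + k * s := by
    rw [hypdef]
    simp only [dotProduct_add, dotProduct_smul, smul_eq_mul]
    rfl
  have hinvyp : H⁻¹ *ᵥ yp = H⁻¹ *ᵥ y + k • w := by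
    rw [hypdef, mulVec_add, mulVec_smul, hHinvA]
  have hquad : (H⁻¹ *ᵥ yp) ⬝ᵥ yp = q + 2*(k*t) + k^2*s := by
    rw [hinvyp, hypdef]
    simp only [add_dotProduct, dotProduct_add, smul_dotProduct, dotProduct_smul, smul_eq_mul]
    rw [hswap y a, hHinvA, dotProduct_comm y w, ← htdef, ← hsdef, ← hqdef]
    ring
  set z : Fin n → ℝ :=
    (N^2/(N^2-1))⁻¹ • (H⁻¹ *ᵥ yp + ((2/((N-1)*s)) * (w ⬝ᵥ yp)) • w) with hzdef
  have haz : a ⬝ᵥ z = (N^2/(N^2-1))⁻¹ * ((1 + 2/(N-1)) * (w ⬝ᵥ yp)) := by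
    rw [hzdef]
    simp only [dotProduct_smul, dotProduct_add, smul_eq_mul]
    rw [← hswap a yp, hHinvA, dotProduct_comm a w, ← hsdef]
    field_simp
  have hHz : H *ᵥ z = (N^2/(N^2-1))⁻¹ • (yp + ((2/((N-1)*s)) * (w ⬝ᵥ yp)) • a) := by
    rw [hzdef, mulVec_smul, mulVec_add, mulVec_smul, hHA, ← ha]
  have hz2 : Hp *ᵥ z = yp := by
    rw [hHp, smul_mulVec, sub_mulVec, smul_mulVec, smul_mulVec,
      hVmul, hHz, haz]
    have hNe : N^2/(N^2-1) ≠ 0 := hτpos.ne'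
    have h1' : N - 1 ≠ 0 := hN1.ne'
    have h2' : N + 1 ≠ 0 := hN2.ne'
    have h3' : N^2 - 1 ≠ 0 := hNN.ne'
    have h4' : N ≠ 0 := by positivity
    clear_value N a s r y k yp t q z Hp
    match_scalars
    · field_simp
    · field_simp
      ring
  have hfinal : Hp⁻¹ *ᵥ yp = z := by
    rw [← hz2, mulVec_mulVec, nonsing_inv_mul Hp hdetp, one_mulVec]
  rw [hfinal]
  have hdot : z ⬝ᵥ yp =
      (N^2/(N^2-1))⁻¹ * (q + 2*(k*t) + k^2*s + (2/((N-1)*s))*(t + k*s)^2) := by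
    rw [hzdef]
    simp only [smul_dotProduct, add_dotProduct, smul_eq_mul]
    rw [hquad, hwyp]
    ring
  rw [hdot]
  have hcs : t^2 ≤ r^2 * q := by rw [hr2, htdef, hqdef]; exact hCS2 y
  rw [show s = r^2 from hr2.symm]
  exact key_ineq N q t r k hN hr hq1 ht1 hcs (by rw [hk, one_div, one_div, mul_inv])
end

section
/- Let n ≥ 2, let H be a symmetric positive definite n×n real matrix, c ∈ ℝⁿ, and w ∈ ℝⁿ with w ≠ 0. Define c⁺ = c − (1/(n+1))·Hw/√(⟨w, Hw⟩) and H⁺ = (n²/(n²−1))·(H − (2/(n+1))·(Hw)(Hw)ᵀ/⟨w, Hw⟩). Then the Lebesgue volumes of the ellipsoids satisfy vol(E(c⁺, H⁺)) ≤ e^{−1/(2n)} · vol(E(c, H)). -/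
open Matrix MeasureTheory

set_option maxHeartbeats 1000000 in
private lemma ellipsoid_key_log_ineq {x : ℝ} (hx : 0 < x) (hx2 : x ≤ 1/2) :
    x^2 ≤ (1+x) * Real.log (1+x) + (1-x) * Real.log (1-x) := by
  have hx1 : |x| < 1 := by rw [abs_of_pos hx]; linarith
  have hx1' : |(-x)| < 1 := by rwa [abs_neg]
  have hx1'' : |x^2| < 1 := by
    rw [abs_of_nonneg (sq_nonneg x)]; nlinarith
  have A := Real.abs_log_sub_add_sum_range_le hx1 9
  have B := Real.abs_log_sub_add_sum_range_le hx1' 9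
  have C := Real.abs_log_sub_add_sum_range_le hx1'' 4
  simp only [Finset.sum_range_succ, Finset.sum_range_zero] at A B C
  norm_num at A B C
  rw [abs_of_pos hx] at A B
  rw [abs_le] at A B C
  obtain ⟨A1, A2⟩ := A
  obtain ⟨B1, B2⟩ := B
  obtain ⟨C1, C2⟩ := C
  have hd1 : (0:ℝ) < 1 - x := by linarith
  have hd2 : (0:ℝ) < 1 - x^2 := by nlinarith
  have hsq : x^2 ≤ 1/4 := by nlinarith
  have h10 : (0:ℝ) ≤ x ^ 10 := pow_nonneg hx.le 10
  have hE1 : x ^ 10 / (1 - x) ≤ 2 * x ^ 10 := by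
    rw [div_le_iff₀ hd1]; nlinarith [pow_nonneg hx.le 11]
  have hE2 : (x^2) ^ 5 / (1 - x^2) ≤ (4/3) * x ^ 10 := by
    rw [div_le_iff₀ hd2]
    nlinarith [mul_le_mul_of_nonneg_left hsq h10]
  have hL1 : x - x^2/2 + x^3/3 - x^4/4 + x^5/5 - x^6/6 + x^7/7 - x^8/8 + x^9/9 - 2*x^10
      ≤ Real.log (1+x) := by nlinarith [B1, hE1]
  have hL2 : Real.log (1-x) ≤ -(x + x^2/2 + x^3/3 + x^4/4 + x^5/5 + x^6/6 + x^7/7 + x^8/8 + x^9/9)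
      + 2*x^10 := by nlinarith [A2, hE1]
  have hL3 : -(x^2 + x^4/2 + x^6/3 + x^8/4) - (4/3)*x^10 ≤ Real.log (1-x^2) := by
    nlinarith [C1, hE2]
  have hlog : Real.log (1-x^2) = Real.log (1+x) + Real.log (1-x) := by
    rw [← Real.log_mul (by linarith) (by linarith)]; ring_nf
  have p1 := mul_le_mul_of_nonneg_left hL1 hx.le
  have p2 := mul_le_mul_of_nonneg_left hL2 hx.le
  have hx6 : x ^ 6 ≤ 1 / 64 := pow_le_pow_left₀ hx.le hx2 6 |>.trans_eq (by norm_num)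
  have h4 : (0:ℝ) ≤ x ^ 4 := pow_nonneg hx.le 4
  have key : x^2 ≤ Real.log (1-x^2) + x * Real.log (1+x) - x * Real.log (1-x) := by
    nlinarith [p1, p2, hL3, mul_nonneg h4 (sub_nonneg.2 hx6), pow_nonneg hx.le 11]
  nlinarith [key, hlog]

private lemma ellipsoid_det_bound (n : ℕ) (hn : 2 ≤ n) :
    Real.sqrt ((n:ℝ)^2/((n:ℝ)^2-1)) ^ n * Real.sqrt (((n:ℝ)-1)/((n:ℝ)+1)) ≤
      Real.exp (-1/(2*(n:ℝ))) := by
  have hm' : (2:ℝ) ≤ (n:ℝ) := by exact_mod_cast hn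
  set m : ℝ := (n:ℝ) with hmdef
  have hm : (2:ℝ) ≤ m := hm'
  have hm0 : (0:ℝ) < m := by linarith
  have hm0' : m ≠ 0 := hm0.ne'
  have hm1 : (0:ℝ) < m^2 - 1 := by nlinarith
  have hm1' : m^2 - 1 ≠ 0 := hm1.ne'
  set x : ℝ := 1/m with hxdef
  have hx : 0 < x := by positivity
  have hx2 : x ≤ 1/2 := by rw [hxdef, div_le_div_iff₀ hm0 (by norm_num)]; linarith
  have h1x : (0:ℝ) < 1 + x := by linarith
  have h2x : (0:ℝ) < 1 - x := by
    rw [hxdef]; rw [sub_pos, div_lt_one hm0]; linarith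
  set L1 := Real.log (1+x) with hL1def
  set L2 := Real.log (1-x) with hL2def
  have hxx : (1+x)*(1-x) = (m^2-1)/m^2 := by rw [hxdef]; field_simp; ring
  have ha2 : Real.log (Real.sqrt (m^2/(m^2-1))) = -(L1+L2)/2 := by
    rw [Real.log_sqrt (by positivity)]
    rw [show m^2/(m^2-1) = ((1+x)*(1-x))⁻¹ by rw [hxx, inv_div]]
    rw [Real.log_inv, Real.log_mul h1x.ne' h2x.ne']
    try ring
  have ht : Real.log (Real.sqrt ((m-1)/(m+1))) = (L2-L1)/2 := by
    rw [Real.log_sqrt (div_nonneg (by linarith) (by linarith))]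
    rw [show (m-1)/(m+1) = (1-x)/(1+x) by rw [hxdef]; field_simp; try ring]
    rw [Real.log_div h2x.ne' h1x.ne']
    try ring
  have ha : (0:ℝ) < Real.sqrt (m^2/(m^2-1)) := Real.sqrt_pos.2 (by positivity)
  have htpos : (0:ℝ) < Real.sqrt ((m-1)/(m+1)) :=
    Real.sqrt_pos.2 (div_pos (by linarith) (by linarith))
  have hLHSpos : (0:ℝ) < Real.sqrt (m^2/(m^2-1)) ^ n * Real.sqrt ((m-1)/(m+1)) := by positivity
  rw [← Real.exp_log hLHSpos]
  apply Real.exp_le_exp.2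
  rw [Real.log_mul (by positivity) htpos.ne', Real.log_pow, ha2, ht]
  have key : x^2 ≤ (1+x)*L1 + (1-x)*L2 := ellipsoid_key_log_ineq hx hx2
  have e1 : m * x^2 = 1/m := by rw [hxdef]; field_simp
  have e2 : m * ((1+x)*L1 + (1-x)*L2) = (m+1)*L1 + (m-1)*L2 := by
    rw [hxdef]; field_simp; try ring
  have key3 : 1/m ≤ (m+1)*L1 + (m-1)*L2 := by
    have h := mul_le_mul_of_nonneg_left key hm0.le
    rw [e2, e1] at h; exact h
  have e3 : -1/(2*m) = -(1/m)/2 := by field_simp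
  rw [hmdef] at key3 ⊢
  rw [e3]
  linarith [key3]

private lemma ellipsoid_vmv_mul {n : ℕ} (a b : Fin n → ℝ) (M : Matrix (Fin n) (Fin n) ℝ) :
    vecMulVec a b * M = vecMulVec a (b ᵥ* M) := by
  ext i j
  simp [Matrix.mul_apply, vecMulVec_apply, Matrix.vecMul, dotProduct,
    Finset.mul_sum, mul_assoc]

private lemma ellipsoid_mul_vmv {n : ℕ} (a b : Fin n → ℝ) (M : Matrix (Fin n) (Fin n) ℝ) :
    M * vecMulVec a b = vecMulVec (M *ᵥ a) b := by
  ext i j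
  simp [Matrix.mul_apply, vecMulVec_apply, Matrix.mulVec, dotProduct,
    Finset.sum_mul, mul_assoc, mul_comm, mul_left_comm]
  rw [Finset.mul_sum]
  apply Finset.sum_congr rfl
  intros; ring

private lemma ellipsoid_vmv_vmv {n : ℕ} (a b c d : Fin n → ℝ) :
    vecMulVec a b * vecMulVec c d = (b ⬝ᵥ c) • vecMulVec a d := by
  ext i j
  simp [Matrix.mul_apply, vecMulVec_apply, dotProduct, Finset.sum_mul,
    Finset.mul_sum]
  apply Finset.sum_congr rfl
  intros; ring

private lemma ellipsoid_vmv_transpose {n : ℕ} (a b : Fin n → ℝ) :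
    (vecMulVec a b)ᵀ = vecMulVec b a := by
  ext i j; simp [vecMulVec_apply, mul_comm]

private lemma ellipsoid_smul_vmv {n : ℕ} (r : ℝ) (a b : Fin n → ℝ) :
    r • vecMulVec a b = vecMulVec (r • a) b := by
  ext i j; simp [vecMulVec_apply, mul_assoc]

private lemma ellipsoid_det_one_sub_vmv {n : ℕ} (a b : Fin n → ℝ) :
    (1 - vecMulVec a b).det = 1 - b ⬝ᵥ a := by
  have : (1 : Matrix (Fin n) (Fin n) ℝ) - vecMulVec a b
      = 1 + Matrix.replicateCol (Fin 1) (-a) * Matrix.replicateRow (Fin 1) b := by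
    rw [sub_eq_add_neg]; erw [← vecMulVec_eq (Fin 1)]
    congr 1
    ext i j
    simp [vecMulVec_apply]
  rw [this]; erw [Matrix.det_one_add_replicateCol_mul_replicateRow]
  rw [sub_eq_add_neg]
  congr 1
  simp [dotProduct]

private lemma ellipsoid_conj {n : ℕ} (H : Matrix (Fin n) (Fin n) ℝ) (hHs : Hᵀ = H)
    (w u : Fin n → ℝ) (hu : u = H *ᵥ w) (g σ a : ℝ) (hσ : σ = w ⬝ᵥ u) :
    (a • (1 - g • vecMulVec u w)) * H * (a • (1 - g • vecMulVec u w))ᵀ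
      = (a*a) • (H - (2*g - g^2*σ) • vecMulVec u u) := by
  have hwH : w ᵥ* H = u := by rw [← hHs, Matrix.vecMul_transpose]; exact hu.symm
  have huw : H *ᵥ w = u := hu.symm
  rw [transpose_smul, transpose_sub, transpose_one, transpose_smul, ellipsoid_vmv_transpose]
  rw [Matrix.smul_mul, Matrix.smul_mul, Matrix.mul_smul, smul_smul]
  congr 1
  rw [sub_mul, one_mul, Matrix.smul_mul, ellipsoid_vmv_mul, hwH]
  rw [sub_mul, mul_sub, mul_one, Matrix.mul_smul, ellipsoid_mul_vmv, huw]
  rw [Matrix.smul_mul, mul_sub, Matrix.mul_smul, ellipsoid_vmv_vmv]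
  rw [show u ⬝ᵥ w = σ by rw [hσ]; exact dotProduct_comm u w]
  rw [mul_one]
  module

private lemma ellipsoid_quad_eq {n : ℕ} (B M : Matrix (Fin n) (Fin n) ℝ) (y : Fin n → ℝ) :
    ((B * M * Bᵀ)⁻¹ *ᵥ y) ⬝ᵥ y = (M⁻¹ *ᵥ (B⁻¹ *ᵥ y)) ⬝ᵥ (B⁻¹ *ᵥ y) := by
  rw [Matrix.mul_inv_rev, Matrix.mul_inv_rev, ← Matrix.transpose_nonsing_inv]
  rw [← Matrix.mulVec_mulVec, ← Matrix.mulVec_mulVec]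
  rw [Matrix.mulVec_transpose, ← Matrix.dotProduct_mulVec]

private lemma ellipsoid_vol_preimage {n : ℕ} (B M : Matrix (Fin n) (Fin n) ℝ) (hB : B.det ≠ 0)
    (cp cold : Fin n → ℝ) :
    volume {x : Fin n → ℝ | ((B * M * Bᵀ)⁻¹ *ᵥ (x - cp)) ⬝ᵥ (x - cp) ≤ 1}
      = ENNReal.ofReal |B.det| *
        volume {x : Fin n → ℝ | (M⁻¹ *ᵥ (x - cold)) ⬝ᵥ (x - cold) ≤ 1} := by
  set S := {x : Fin n → ℝ | (M⁻¹ *ᵥ (x - cold)) ⬝ᵥ (x - cold) ≤ 1} with hS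
  have hset : {x : Fin n → ℝ | ((B * M * Bᵀ)⁻¹ *ᵥ (x - cp)) ⬝ᵥ (x - cp) ≤ 1}
      = (fun x => x + (-cp)) ⁻¹' ((fun y => B⁻¹ *ᵥ y) ⁻¹' ((fun z => z + cold) ⁻¹' S)) := by
    ext x
    simp only [Set.mem_preimage, Set.mem_setOf_eq, hS]
    rw [add_sub_cancel_right, ← sub_eq_add_neg, ellipsoid_quad_eq]
  rw [hset]
  rw [measure_preimage_add_right]
  have hlin : (fun y : Fin n → ℝ => B⁻¹ *ᵥ y) = ⇑(Matrix.toLin' B⁻¹) := by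
    ext y i; rw [Matrix.toLin'_apply]
  rw [hlin]
  rw [Measure.addHaar_preimage_linearMap volume
    (by rw [LinearMap.det_toLin', Matrix.det_nonsing_inv, Ring.inverse_eq_inv]
        exact inv_ne_zero hB)]
  rw [measure_preimage_add_right]
  congr 1
  simp [LinearMap.det_toLin', Matrix.det_nonsing_inv, Ring.inverse_eq_inv, abs_inv]

/-- one step of the ellipsoid method: the volume of the new ellipsoid
`E(c⁺, H⁺)` is at most `e^(−1/(2n))` times the volume of `E(c, H)`. -/
theorem ellipsoid_step_volume (n : ℕ) (hn : 2 ≤ n)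
    (H : Matrix (Fin n) (Fin n) ℝ) (hH : H.PosDef)
    (c w : Fin n → ℝ) (hw : w ≠ 0) :
    volume {x : Fin n → ℝ |
        ((((n : ℝ) ^ 2 / ((n : ℝ) ^ 2 - 1)) •
            (H - ((2 : ℝ) / ((n : ℝ) + 1)) •
              ((w ⬝ᵥ (H *ᵥ w))⁻¹ • vecMulVec (H *ᵥ w) (H *ᵥ w))))⁻¹ *ᵥ
          (x - (c - ((1 : ℝ) / ((n : ℝ) + 1)) •
            ((Real.sqrt (w ⬝ᵥ (H *ᵥ w)))⁻¹ • (H *ᵥ w))))) ⬝ᵥ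
          (x - (c - ((1 : ℝ) / ((n : ℝ) + 1)) •
            ((Real.sqrt (w ⬝ᵥ (H *ᵥ w)))⁻¹ • (H *ᵥ w)))) ≤ 1} ≤
      ENNReal.ofReal (Real.exp (-1 / (2 * (n : ℝ)))) *
        volume {x : Fin n → ℝ | (H⁻¹ *ᵥ (x - c)) ⬝ᵥ (x - c) ≤ 1} := by
  have hm' : (2:ℝ) ≤ (n:ℝ) := by exact_mod_cast hn
  have hm1 : (0:ℝ) < (n:ℝ)^2 - 1 := by nlinarith
  have hHs : Hᵀ = H := by
    have := hH.1
    rwa [Matrix.IsHermitian, conjTranspose_eq_transpose_of_trivial] at this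
  set u : Fin n → ℝ := H *ᵥ w with hu
  set σ : ℝ := w ⬝ᵥ u with hσdef
  have hσ : 0 < σ := by simpa [hσdef, hu] using hH.dotProduct_mulVec_pos hw
  set a : ℝ := Real.sqrt ((n:ℝ)^2/((n:ℝ)^2-1)) with hadef
  set t : ℝ := Real.sqrt (((n:ℝ)-1)/((n:ℝ)+1)) with htdef
  have ha : 0 < a := Real.sqrt_pos.2 (by positivity)
  have htpos : 0 < t := Real.sqrt_pos.2 (div_pos (by linarith) (by linarith))
  set γ : ℝ := 1 - t with hγdef
  set B : Matrix (Fin n) (Fin n) ℝ := a • (1 - (γ/σ) • vecMulVec u w) with hBdef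
  -- the new matrix equals B * H * Bᵀ
  have ha2 : a * a = (n:ℝ)^2/((n:ℝ)^2-1) := Real.mul_self_sqrt (by positivity)
  have ht2 : t * t = ((n:ℝ)-1)/((n:ℝ)+1) :=
    Real.mul_self_sqrt (div_nonneg (by linarith) (by linarith))
  have hscal : 2*(γ/σ) - (γ/σ)^2*σ = (2/((n:ℝ)+1)) * σ⁻¹ := by
    have h1 : 2*(γ/σ) - (γ/σ)^2*σ = (2*γ - γ^2) * σ⁻¹ := by
      field_simp
    rw [h1]
    congr 1
    have : 2*γ - γ^2 = 1 - t*t := by rw [hγdef]; ring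
    rw [this, ht2]
    field_simp
    ring
  have hconj := ellipsoid_conj H hHs w u hu (γ/σ) σ a hσdef
  have hHp : ((n : ℝ) ^ 2 / ((n : ℝ) ^ 2 - 1)) •
      (H - ((2 : ℝ) / ((n : ℝ) + 1)) • (σ⁻¹ • vecMulVec u u)) = B * H * Bᵀ := by
    rw [hBdef, hconj, ha2, smul_smul, hscal]
  have hdetB : B.det = a^n * t := by
    rw [hBdef, Matrix.det_smul, Fintype.card_fin]
    congr 1
    rw [ellipsoid_smul_vmv, ellipsoid_det_one_sub_vmv]
    rw [dotProduct_smul, smul_eq_mul, ← hσdef]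
    rw [div_mul_cancel₀ γ hσ.ne', hγdef]
    ring
  have hdet_ne : B.det ≠ 0 := by
    rw [hdetB]; positivity
  have habs : |B.det| = a^n * t := by
    rw [hdetB, abs_of_pos (by positivity)]
  rw [hHp, ellipsoid_vol_preimage B H hdet_ne
    (c - ((1:ℝ)/((n:ℝ)+1)) • ((Real.sqrt σ)⁻¹ • u)) c]
  refine mul_le_mul_left (ENNReal.ofReal_le_ofReal ?_) _
  rw [habs]
  exact ellipsoid_det_bound n hn
end

section
/- Let Q = ∏_{j=1}^{n} [a_j, b_j] ⊂ ℝⁿ be a box, let f be a convex continuously differentiable function on a neighborhood of Q, fix a coordinate index i and a number c ∈ [a_i, b_i], and let Q_k = {x ∈ Q : x_i = c}. If x_* is a minimizer of f over Q_k, then there exists a vector a ∈ N(x_* | Q) (the normal cone of Q at x_*) such that the vector g = ∇f(x_*) + a satisfies g_j = 0 for every coordinate j ≠ i. -/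
open Matrix

/-- if `x_*` minimizes a convex continuously differentiable function `f`
over the slice `Q_k = {x ∈ Q : x_i = c}` of a box `Q`, then there exists a vector
`a` in the normal cone `N(x_* | Q)` such that `g = ∇f(x_*) + a` has zero components
in every coordinate `j ≠ i`.  Here `(∇f(x_*))_j = Df(x_*)(e_j)`. -/
theorem exists_normal_cone_vector_killing_parallel_gradient
    (n : ℕ) (a b : Fin n → ℝ)
    (Q : Set (Fin n → ℝ)) (hQ : Q = {x | ∀ j, x j ∈ Set.Icc (a j) (b j)})
    (U : Set (Fin n → ℝ)) (hU : IsOpen U) (hUconv : Convex ℝ U) (hQU : Q ⊆ U)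
    (f : (Fin n → ℝ) → ℝ) (hf : ContDiffOn ℝ 1 f U) (hconv : ConvexOn ℝ U f)
    (i : Fin n) (c : ℝ) (hc : c ∈ Set.Icc (a i) (b i))
    (xstar : Fin n → ℝ) (hx1 : xstar ∈ Q) (hx2 : xstar i = c)
    (hmin : ∀ x ∈ Q, x i = c → f xstar ≤ f x) :
    ∃ v : Fin n → ℝ, (∀ y ∈ Q, v ⬝ᵥ (y - xstar) ≤ 0) ∧
      ∀ j, j ≠ i → fderiv ℝ f xstar (Pi.single j 1) + v j = 0 := by
  classical
  set D := fderiv ℝ f xstar with hD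
  -- f is differentiable at xstar
  have hxU : xstar ∈ U := hQU hx1
  have hdiff : DifferentiableAt ℝ f xstar :=
    (hf.differentiableOn one_ne_zero xstar hxU).differentiableAt (hU.mem_nhds hxU)
  -- the slice
  set Qk : Set (Fin n → ℝ) := {x ∈ Q | x i = c} with hQk
  have hQkconv : Convex ℝ Qk := by
    intro p hp q hq s t hs ht hst
    constructor
    · rw [hQ]
      intro j
      have hp' : p j ∈ Set.Icc (a j) (b j) := by have := hp.1; rw [hQ] at this; exact this j
      have hq' : q j ∈ Set.Icc (a j) (b j) := by have := hq.1; rw [hQ] at this; exact this j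
      exact (convex_Icc (a j) (b j)) hp' hq' hs ht hst
    · simp only [Pi.add_apply, Pi.smul_apply, smul_eq_mul, hp.2, hq.2]
      linear_combination c * hst
  have hxQk : xstar ∈ Qk := ⟨hx1, hx2⟩
  have hminOn : IsLocalMinOn f Qk xstar := by
    apply IsMinOn.localize
    intro x hx
    exact hmin x hx.1 hx.2
  have hDw : HasFDerivWithinAt f D Qk xstar := hdiff.hasFDerivAt.hasFDerivWithinAt
  -- key: D d ≥ 0 for d = y' - xstar, y' ∈ Qk
  have key : ∀ y' ∈ Qk, 0 ≤ D (y' - xstar) := by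
    intro y' hy'
    exact hminOn.hasFDerivWithinAt_nonneg hDw
      (sub_mem_posTangentConeAt_of_segment_subset (hQkconv.segment_subset hxQk hy'))
  refine ⟨fun j => if j = i then 0 else -(D (Pi.single j 1)), ?_, ?_⟩
  · intro y hy
    -- project y to the slice
    set y' : Fin n → ℝ := Function.update y i c with hy'def
    have hy'Q : y' ∈ Qk := by
      constructor
      · rw [hQ]
        intro j
        by_cases hj : j = i
        · subst hj; simp [hy'def, hc]
        · have := hy; rw [hQ] at this
          simpa [hy'def, Function.update_of_ne hj] using this j
      · simp [hy'def]
    have h0 : 0 ≤ D (y' - xstar) := key y' hy'Q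
    have hexp : D (y' - xstar) = ∑ j, (y' - xstar) j * D (Pi.single j 1) := by
      conv_lhs => rw [pi_eq_sum_univ (y' - xstar)]
      rw [map_sum]
      simp only [_root_.map_smul, smul_eq_mul]
      refine Finset.sum_congr rfl fun j _ => ?_
      have hsingle : (Pi.single j 1 : Fin n → ℝ) = fun k => if j = k then (1:ℝ) else 0 := by
        ext k; simp [Pi.single_apply, eq_comm]
      rw [hsingle]
    have : (fun j => if j = i then (0:ℝ) else -(D (Pi.single j 1))) ⬝ᵥ (y - xstar)
        = -(D (y' - xstar)) := by
      rw [hexp, dotProduct, ← Finset.sum_neg_distrib]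
      apply Finset.sum_congr rfl
      intro j _
      by_cases hj : j = i
      · subst hj
        simp [hy'def, hx2]
      · simp [hj, hy'def, Function.update_of_ne hj]
        ring
    rw [this]
    linarith
  · intro j hj
    simp [hj]
end

section
/- Let Q = ∏_{j=1}^{n} [a_j, b_j] ⊂ ℝⁿ be a box and f a convex differentiable function with L-Lipschitz gradient (L > 0) on a neighborhood of Q. Fix a coordinate index i and c ∈ (a_i, b_i), and let Q_k = {x ∈ Q : x_i = c}. Let x_* be a minimizer of f over Q_k, and let x ∈ Q_k be a point with ‖x − x_*‖ ≤ |∂f/∂x_i(x)| / L. If ∂f/∂x_i(x) > 0, then min_{z ∈ Q, z_i ≤ c} f(z) = min_{z ∈ Q} f(z); that is, after discarding the part of the box where x_i > c, the remaining part still contains a minimizer of f over Q. -/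
open scoped RealInnerProductSpace

section Aux

variable {E : Type*} [NormedAddCommGroup E] [InnerProductSpace ℝ E] [CompleteSpace E]

/-- Derivative of `f` along the segment from `p` to `q`, at `t = 0`. -/
lemma aux_hasDerivAt_line {f : E → ℝ} {p : E} (q : E) (hf : DifferentiableAt ℝ f p) :
    HasDerivAt (fun t : ℝ => f (p + t • (q - p))) ⟪gradient f p, q - p⟫ 0 := by
  have h1 : HasDerivAt (fun t : ℝ => p + t • (q - p)) (q - p) 0 := by
    simpa using ((hasDerivAt_id (0 : ℝ)).smul_const (q - p)).const_add p
  have h2 : HasFDerivAt f ((InnerProductSpace.toDual ℝ E) (gradient f p))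
      (p + (0 : ℝ) • (q - p)) := by
    simpa using hf.hasGradientAt.hasFDerivAt
  simpa [Function.comp_def] using h2.comp_hasDerivAt 0 h1

/-- Gradient inequality for a convex differentiable function. -/
lemma aux_grad_inner_le_sub {U : Set E} {f : E → ℝ} (hconv : ConvexOn ℝ U f)
    (hdiff : ∀ x ∈ U, DifferentiableAt ℝ f x)
    {p q : E} (hp : p ∈ U) (hq : q ∈ U) :
    ⟪gradient f p, q - p⟫ ≤ f q - f p := by
  set A : ℝ →ᵃ[ℝ] E := AffineMap.lineMap p q with hA
  have hAt : ∀ t : ℝ, A t = p + t • (q - p) := by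
    intro t
    simp [hA, AffineMap.lineMap_apply]
    abel
  have hg : ConvexOn ℝ (A ⁻¹' U) (f ∘ A) := hconv.comp_affineMap A
  have h0 : (0 : ℝ) ∈ A ⁻¹' U := by
    simp only [Set.mem_preimage, hAt]; simpa using hp
  have h1 : (1 : ℝ) ∈ A ⁻¹' U := by
    simp only [Set.mem_preimage, hAt]; simpa using hq
  have hd : HasDerivAt (f ∘ A) ⟪gradient f p, q - p⟫ 0 := by
    have h := aux_hasDerivAt_line q (hdiff p hp)
    have he : (f ∘ A) = fun t : ℝ => f (p + t • (q - p)) := by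
      funext t; simp [Function.comp, hAt]
    rw [he]; exact h
  have hslope := hg.le_slope_of_hasDerivAt h0 h1 one_pos hd
  rw [slope_def_field] at hslope
  simpa [hAt] using hslope

/-- First-order optimality on a convex set. -/
lemma aux_grad_inner_nonneg {U : Set E} {f : E → ℝ}
    (hdiff : ∀ x ∈ U, DifferentiableAt ℝ f x)
    {K : Set E} (hK : Convex ℝ K) (hKU : K ⊆ U)
    {p : E} (hp : p ∈ K) (hminK : ∀ z ∈ K, f p ≤ f z) {z : E} (hz : z ∈ K) :
    0 ≤ ⟪gradient f p, z - p⟫ := by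
  have hd := aux_hasDerivAt_line z (hdiff p (hKU hp))
  have hslope : Filter.Tendsto (slope (fun t : ℝ => f (p + t • (z - p))) 0)
      (nhdsWithin 0 (Set.Ioi 0)) (nhds ⟪gradient f p, z - p⟫) :=
    (hasDerivAt_iff_tendsto_slope.mp hd).mono_left
      (nhdsWithin_mono _ fun t ht => ne_of_gt ht)
  refine ge_of_tendsto hslope ?_
  filter_upwards [Ioc_mem_nhdsGT_of_mem (Set.left_mem_Ico.mpr one_pos)] with t ht
  have hmem : p + t • (z - p) ∈ K := hK.add_smul_sub_mem hp hz ⟨ht.1.le, ht.2⟩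
  have hle : f p ≤ f (p + t • (z - p)) := hminK _ hmem
  rw [slope_def_field]
  have h0 : f (p + (0 : ℝ) • (z - p)) = f p := by simp
  rw [h0, sub_zero]
  exact div_nonneg (by linarith) ht.1.le

end Aux

/-- in the multidimensional dichotomy method, if `x` is an accurate
enough approximation (`‖x − x_*‖ ≤ |∂f/∂x_i(x)|/L`) of the minimizer `x_*` of `f`
over the slice `Q_k = {z ∈ Q : z_i = c}` of a box `Q`, and `∂f/∂x_i(x) > 0`, then
the half-box `{z ∈ Q : z_i ≤ c}` still contains a minimizer of `f` over `Q`. -/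
theorem dichotomy_half_box_contains_minimizer
    (n : ℕ) (L : ℝ) (hL : 0 < L) (a b : Fin n → ℝ)
    (Q : Set (EuclideanSpace ℝ (Fin n)))
    (hQ : Q = {x | ∀ j, x j ∈ Set.Icc (a j) (b j)})
    (U : Set (EuclideanSpace ℝ (Fin n))) (hU : IsOpen U) (hUconv : Convex ℝ U)
    (hQU : Q ⊆ U)
    (f : EuclideanSpace ℝ (Fin n) → ℝ)
    (hdiff : ∀ x ∈ U, DifferentiableAt ℝ f x)
    (hconv : ConvexOn ℝ U f)
    (hlip : ∀ x ∈ U, ∀ y ∈ U, ‖gradient f x - gradient f y‖ ≤ L * ‖x - y‖)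
    (i : Fin n) (c : ℝ) (hc : c ∈ Set.Ioo (a i) (b i))
    (xstar : EuclideanSpace ℝ (Fin n)) (hx1 : xstar ∈ Q) (hx2 : xstar i = c)
    (hmin : ∀ z ∈ Q, z i = c → f xstar ≤ f z)
    (x : EuclideanSpace ℝ (Fin n)) (hxQ : x ∈ Q) (hxi : x i = c)
    (hclose : ‖x - xstar‖ ≤ |gradient f x i| / L)
    (hpos : 0 < gradient f x i) :
    ∃ z ∈ Q, z i ≤ c ∧ ∀ y ∈ Q, f z ≤ f y := by
  -- Q is compact
  have hQc : IsCompact Q := by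
    rw [hQ]
    have hpi : IsCompact (Set.univ.pi fun j => Set.Icc (a j) (b j)) :=
      isCompact_univ_pi fun j => isCompact_Icc
    have heq : {x : EuclideanSpace ℝ (Fin n) | ∀ j, x j ∈ Set.Icc (a j) (b j)} =
        (⇑(EuclideanSpace.equiv (Fin n) ℝ)) ⁻¹' (Set.univ.pi fun j => Set.Icc (a j) (b j)) := by
      ext y
      simp only [Set.mem_setOf_eq, Set.mem_preimage, Set.mem_pi, Set.mem_univ, forall_true_left,
        Set.mem_Icc]
      exact Iff.rfl
    rw [heq]
    exact (EuclideanSpace.equiv (Fin n) ℝ).toHomeomorph.isCompact_preimage.mpr hpi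
  have hfc : ContinuousOn f Q := fun z hz =>
    (hdiff z (hQU hz)).continuousAt.continuousWithinAt
  obtain ⟨w, hwQ, hwmin⟩ := hQc.exists_isMinOn ⟨x, hxQ⟩ hfc
  rw [isMinOn_iff] at hwmin
  by_cases hwi : w i ≤ c
  · exact ⟨w, hwQ, hwi, fun y hy => hwmin y hy⟩
  push_neg at hwi
  -- gradient of f at xstar in direction i is nonneg
  have hgi : 0 ≤ gradient f xstar i := by
    have hb : ‖gradient f x - gradient f xstar‖ ≤ |gradient f x i| := by
      calc ‖gradient f x - gradient f xstar‖ ≤ L * ‖x - xstar‖ :=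
            hlip x (hQU hxQ) xstar (hQU hx1)
        _ ≤ L * (|gradient f x i| / L) := by
            exact mul_le_mul_of_nonneg_left hclose hL.le
        _ = |gradient f x i| := by field_simp
    have hco : |(gradient f x - gradient f xstar) i| ≤ ‖gradient f x - gradient f xstar‖ := by
      have h := norm_inner_le_norm (𝕜 := ℝ) (gradient f x - gradient f xstar)
        (EuclideanSpace.single i (1 : ℝ))
      simpa [EuclideanSpace.inner_single_right] using h
    have hsub : (gradient f x - gradient f xstar) i = gradient f x i - gradient f xstar i := rfl
    rw [hsub] at hco
    have habs : |gradient f x i| = gradient f x i := abs_of_pos hpos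
    have := (abs_le.mp (hco.trans hb)).2
    linarith
  -- the slice K
  set K : Set (EuclideanSpace ℝ (Fin n)) := {z ∈ Q | z i = c} with hKdef
  have hQconv : Convex ℝ Q := by
    rw [hQ]
    intro u hu v hv s t hs ht hst
    intro j
    have : (s • u + t • v) j = s * u j + t * v j := rfl
    rw [Set.mem_setOf_eq] at hu hv
    exact this ▸ (convex_Icc (a j) (b j)) (hu j) (hv j) hs ht hst
  have hKconv : Convex ℝ K := by
    intro u hu v hv s t hs ht hst
    refine ⟨hQconv hu.1 hv.1 hs ht hst, ?_⟩
    have : (s • u + t • v) i = s * u i + t * v i := rfl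
    rw [this, hu.2, hv.2, ← add_mul, hst, one_mul]
  have hKU : K ⊆ U := fun z hz => hQU hz.1
  have hxsK : xstar ∈ K := ⟨hx1, hx2⟩
  have hminK : ∀ z ∈ K, f xstar ≤ f z := fun z hz => hmin z hz.1 hz.2
  -- projection of w onto slice
  set w' : EuclideanSpace ℝ (Fin n) := WithLp.toLp 2 fun j => if j = i then c else w j with hw'
  have hw'j : ∀ j, w' j = if j = i then c else w j := fun j => rfl
  have hw'Q : w' ∈ Q := by
    rw [hQ]
    intro j
    rw [hw'j]
    by_cases hj : j = i
    · simp only [hj, if_pos rfl]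
      exact ⟨hc.1.le, hc.2.le⟩
    · simp only [if_neg hj]
      exact (hQ ▸ hwQ) j
  have hw'K : w' ∈ K := ⟨hw'Q, by rw [hw'j]; simp⟩
  have h1 : 0 ≤ ⟪gradient f xstar, w' - xstar⟫ :=
    aux_grad_inner_nonneg hdiff hKconv hKU hxsK hminK hw'K
  have hdiffw : w - w' = EuclideanSpace.single i (w i - c) := by
    ext j
    have : (w - w') j = w j - w' j := rfl
    rw [this, hw'j, EuclideanSpace.single_apply]
    by_cases hj : j = i
    · subst hj; simp
    · simp [hj]
  have h2 : ⟪gradient f xstar, w - w'⟫ = (w i - c) * gradient f xstar i := by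
    rw [hdiffw, EuclideanSpace.inner_single_right]
    simp
  have hsplit : ⟪gradient f xstar, w - xstar⟫ =
      ⟪gradient f xstar, w' - xstar⟫ + ⟪gradient f xstar, w - w'⟫ := by
    rw [← inner_add_right]
    congr 1
    abel
  have h3 : 0 ≤ ⟪gradient f xstar, w - xstar⟫ := by
    rw [hsplit]
    have : 0 ≤ (w i - c) * gradient f xstar i :=
      mul_nonneg (by linarith) hgi
    rw [h2]; linarith
  have h4 : ⟪gradient f xstar, w - xstar⟫ ≤ f w - f xstar :=
    aux_grad_inner_le_sub hconv hdiff (hQU hx1) (hQU hwQ)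
  have hxw : f xstar ≤ f w := by linarith
  exact ⟨xstar, hx1, le_of_eq hx2, fun y hy => hxw.trans (hwmin y hy)⟩
end

section
/- Let Q = ∏_{j=1}^{n} [a_j, b_j] ⊂ ℝⁿ be a box whose diameter (length of the diagonal) is at most R, and let f be a convex function on a neighborhood of Q that is M-Lipschitz and has L-Lipschitz gradient (M, L > 0). Fix a coordinate index i and c ∈ (a_i, b_i), let Q̃ = {x ∈ Q : x_i = c}, let x_* be a minimizer of f over Q̃, and let x ∈ Q̃ be a point with ‖x − x_*‖ ≤ Δ. Then f(x) − min_{z ∈ Q} f(z) ≤ M·Δ + (|∂f/∂x_i(x)| + L·Δ)·R. In particular, if Δ ≤ (ε − R·|∂f/∂x_i(x)|)/(M + L·R) for some ε > 0, then f(x) − min_{z ∈ Q} f(z) ≤ ε. -/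
open Set

lemma coord_abs_le_norm' {n : ℕ} (u : EuclideanSpace ℝ (Fin n)) (i : Fin n) : |u i| ≤ ‖u‖ := by
  have h := abs_real_inner_le_norm (EuclideanSpace.single i (1 : ℝ)) u
  simpa [EuclideanSpace.inner_single_left] using h

lemma fderiv_eq_inner_gradient' {n : ℕ} (f : EuclideanSpace ℝ (Fin n) → ℝ)
    (p v : EuclideanSpace ℝ (Fin n)) :
    fderiv ℝ f p v = inner ℝ (gradient f p) v := by
  rw [gradient, ← InnerProductSpace.toDual_apply_apply, LinearIsometryEquiv.apply_symm_apply]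

lemma grad_convex_ineq' {n : ℕ} {U : Set (EuclideanSpace ℝ (Fin n))} (hUconv : Convex ℝ U)
    {f : EuclideanSpace ℝ (Fin n) → ℝ}
    (hdiff : ∀ x ∈ U, DifferentiableAt ℝ f x)
    (hconv : ConvexOn ℝ U f) {p q : EuclideanSpace ℝ (Fin n)} (hp : p ∈ U) (hq : q ∈ U) :
    f p + inner ℝ (gradient f p) (q - p) ≤ f q := by
  have hsub : Icc (0:ℝ) 1 ⊆ (AffineMap.lineMap p q : ℝ →ᵃ[ℝ] _) ⁻¹' U := by
    intro t ht
    have : AffineMap.lineMap p q t ∈ segment ℝ p q := by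
      rw [segment_eq_image_lineMap]; exact mem_image_of_mem _ ht
    exact hUconv.segment_subset hp hq this
  have hφconv : ConvexOn ℝ (Icc (0:ℝ) 1) (f ∘ (AffineMap.lineMap p q : ℝ →ᵃ[ℝ] _)) :=
    (hconv.comp_affineMap _).subset hsub (convex_Icc 0 1)
  have hline : HasDerivAt (AffineMap.lineMap p q : ℝ → EuclideanSpace ℝ (Fin n)) (q - p) 0 := by
    have h1 : HasDerivAt (fun t : ℝ => t • (q - p) + p) ((1:ℝ) • (q - p)) 0 :=
      ((hasDerivAt_id (0:ℝ)).smul_const (q - p)).add_const p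
    rw [one_smul] at h1
    convert h1 using 1
    funext t
    simp [AffineMap.lineMap_apply, vsub_eq_sub, vadd_eq_add]
  have hFD : HasFDerivAt f (fderiv ℝ f p) (AffineMap.lineMap p q (0:ℝ)) := by
    simpa using (hdiff p hp).hasFDerivAt
  have hder : HasDerivAt (f ∘ (AffineMap.lineMap p q : ℝ →ᵃ[ℝ] _)) (fderiv ℝ f p (q - p)) 0 :=
    hFD.comp_hasDerivAt 0 hline
  have hs := hφconv.le_slope_of_hasDerivAt (by norm_num) (by norm_num) one_pos hder
  rw [slope_def_field] at hs
  simp only [Function.comp_apply, AffineMap.lineMap_apply_zero, AffineMap.lineMap_apply_one] at hs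
  have h := fderiv_eq_inner_gradient' f p (q - p)
  rw [h] at hs
  have : (f q - f p) / (1 - 0) = f q - f p := by norm_num
  linarith [hs, this ▸ hs]


/-- stopping criterion for the multidimensional dichotomy.  If `x`
approximates within `Δ` (in argument) the minimizer `x_*` of `f` over a slice
`Q̃ = {z ∈ Q : z_i = c}` of a box `Q` of diameter at most `R`, then
`f(x) − min_Q f ≤ M·Δ + (|∂f/∂x_i(x)| + L·Δ)·R`; in particular, if
`Δ ≤ (ε − R·|∂f/∂x_i(x)|)/(M + L·R)` for some `ε > 0`, then `f(x) − min_Q f ≤ ε`. -/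
theorem dichotomy_stopping_criterion
    (n : ℕ) (M L R Δ : ℝ) (hM : 0 < M) (hL : 0 < L) (a b : Fin n → ℝ)
    (Q : Set (EuclideanSpace ℝ (Fin n)))
    (hQ : Q = {x | ∀ j, x j ∈ Set.Icc (a j) (b j)})
    (hdiam : ∀ p ∈ Q, ∀ q ∈ Q, ‖p - q‖ ≤ R)
    (U : Set (EuclideanSpace ℝ (Fin n))) (hU : IsOpen U) (hUconv : Convex ℝ U)
    (hQU : Q ⊆ U)
    (f : EuclideanSpace ℝ (Fin n) → ℝ)
    (hdiff : ∀ x ∈ U, DifferentiableAt ℝ f x)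
    (hconv : ConvexOn ℝ U f)
    (hMlip : ∀ p ∈ U, ∀ q ∈ U, |f p - f q| ≤ M * ‖p - q‖)
    (hlip : ∀ p ∈ U, ∀ q ∈ U, ‖gradient f p - gradient f q‖ ≤ L * ‖p - q‖)
    (i : Fin n) (c : ℝ) (hc : c ∈ Set.Ioo (a i) (b i))
    (xstar : EuclideanSpace ℝ (Fin n)) (hx1 : xstar ∈ Q) (hx2 : xstar i = c)
    (hmin : ∀ z ∈ Q, z i = c → f xstar ≤ f z)
    (x : EuclideanSpace ℝ (Fin n)) (hxQ : x ∈ Q) (hxi : x i = c)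
    (hclose : ‖x - xstar‖ ≤ Δ) :
    (∀ z ∈ Q, f x - f z ≤ M * Δ + (|gradient f x i| + L * Δ) * R) ∧
      ∀ ε : ℝ, 0 < ε → Δ ≤ (ε - R * |gradient f x i|) / (M + L * R) →
        ∀ z ∈ Q, f x - f z ≤ ε := by
  have hR0 : (0:ℝ) ≤ R := by
    have h := hdiam x hxQ x hxQ
    simpa using h
  have hΔ0 : (0:ℝ) ≤ Δ := le_trans (norm_nonneg _) hclose
  have hxU : x ∈ U := hQU hxQ
  have hxsU : xstar ∈ U := hQU hx1
  set S : Set (EuclideanSpace ℝ (Fin n)) := {w | w ∈ Q ∧ w i = c} with hS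
  have hSconv : Convex ℝ S := by
    intro u hu v hv α β hα hβ hαβ
    refine ⟨?_, ?_⟩
    · rw [hQ]
      intro j
      have hu' : u j ∈ Set.Icc (a j) (b j) := by
        have h := hu.1; rw [hQ] at h; exact h j
      have hv' : v j ∈ Set.Icc (a j) (b j) := by
        have h := hv.1; rw [hQ] at h; exact h j
      have hcomb := (convex_Icc (a j) (b j)) hu' hv' hα hβ hαβ
      simpa [PiLp.add_apply, PiLp.smul_apply, smul_eq_mul] using hcomb
    · have h1 : u i = c := hu.2
      have h2 : v i = c := hv.2
      have : (α • u + β • v) i = α * u i + β * v i := by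
        simp [PiLp.add_apply, PiLp.smul_apply, smul_eq_mul]
      rw [this, h1, h2, ← add_mul, hαβ, one_mul]
  have main : ∀ z ∈ Q, f x - f z ≤ M * Δ + (|gradient f x i| + L * Δ) * R := by
    intro z hzQ
    have hzU : z ∈ U := hQU hzQ
    set z' : EuclideanSpace ℝ (Fin n) := z + (c - z i) • EuclideanSpace.single i (1:ℝ)
      with hz'
    have hz'i : z' i = c := by
      simp [hz', PiLp.add_apply, PiLp.smul_apply, EuclideanSpace.single_apply]
    have hz'Q : z' ∈ Q := by
      rw [hQ]; intro j
      by_cases hji : j = i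
      · subst hji
        rw [hz'i]; exact ⟨hc.1.le, hc.2.le⟩
      · have hj : z' j = z j := by
          simp [hz', PiLp.add_apply, PiLp.smul_apply, EuclideanSpace.single_apply, hji]
        rw [hj]
        have h := hzQ; rw [hQ] at h; exact h j
    have hz'S : z' ∈ S := ⟨hz'Q, hz'i⟩
    have hxsS : xstar ∈ S := ⟨hx1, hx2⟩
    have hminOn : IsMinOn f S xstar := fun w hw => hmin w hw.1 hw.2
    have htang : z' - xstar ∈ posTangentConeAt S xstar :=
      sub_mem_posTangentConeAt_of_segment_subset (hSconv.segment_subset hxsS hz'S)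
    have hopt : (0:ℝ) ≤ fderiv ℝ f xstar (z' - xstar) :=
      hminOn.localize.hasFDerivWithinAt_nonneg
        ((hdiff xstar hxsU).hasFDerivAt.hasFDerivWithinAt) htang
    have hopt' : (0:ℝ) ≤ inner ℝ (gradient f xstar) (z' - xstar) := by
      rwa [fderiv_eq_inner_gradient'] at hopt
    have hcg : f xstar + inner ℝ (gradient f xstar) (z - xstar) ≤ f z :=
      grad_convex_ineq' hUconv hdiff hconv hxsU hzU
    have hMx : f x - f xstar ≤ M * Δ := by
      have h1 := hMlip x hxU xstar hxsU
      have h2 := le_abs_self (f x - f xstar)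
      have h3 : M * ‖x - xstar‖ ≤ M * Δ := mul_le_mul_of_nonneg_left hclose hM.le
      linarith
    have hdecomp : (inner ℝ (gradient f xstar) (z - xstar) : ℝ)
        = inner ℝ (gradient f xstar) (z' - xstar) - inner ℝ (gradient f xstar) (z' - z) := by
      rw [← inner_sub_right]
      congr 1
      abel
    have hz'z : (z' - z : EuclideanSpace ℝ (Fin n))
        = (c - z i) • EuclideanSpace.single i (1:ℝ) := by
      rw [hz']; abel
    have hinn : (inner ℝ (gradient f xstar) (z' - z) : ℝ) = (c - z i) * gradient f xstar i := by
      rw [hz'z, real_inner_smul_right, EuclideanSpace.inner_single_right]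
      simp
    have hgrad_close : |gradient f xstar i| ≤ |gradient f x i| + L * Δ := by
      have h1 : |gradient f xstar i - gradient f x i|
          ≤ ‖gradient f xstar - gradient f x‖ := by
        have h := coord_abs_le_norm' (gradient f xstar - gradient f x) i
        simpa [PiLp.sub_apply] using h
      have h2 := hlip xstar hxsU x hxU
      have h3 : ‖xstar - x‖ ≤ Δ := by rwa [norm_sub_rev] at hclose
      have h4 : L * ‖xstar - x‖ ≤ L * Δ := mul_le_mul_of_nonneg_left h3 hL.le
      have h5 := abs_sub_abs_le_abs_sub (gradient f xstar i) (gradient f x i)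
      linarith
    have hcz : |c - z i| ≤ R := by
      have h1 : |(xstar - z : EuclideanSpace ℝ (Fin n)) i| ≤ ‖xstar - z‖ :=
        coord_abs_le_norm' _ i
      have h2 : (xstar - z : EuclideanSpace ℝ (Fin n)) i = c - z i := by
        simp [PiLp.sub_apply, hx2]
      have h3 := hdiam xstar hx1 z hzQ
      rw [h2] at h1; linarith
    have hprod : (c - z i) * gradient f xstar i ≤ (|gradient f x i| + L * Δ) * R := by
      calc (c - z i) * gradient f xstar i ≤ |c - z i| * |gradient f xstar i| := by
            rw [← abs_mul]; exact le_abs_self _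
        _ ≤ R * (|gradient f x i| + L * Δ) :=
            mul_le_mul hcz hgrad_close (abs_nonneg _) hR0
        _ = (|gradient f x i| + L * Δ) * R := mul_comm _ _
    have hfin : f xstar - f z ≤ (|gradient f x i| + L * Δ) * R := by
      have := hcg
      rw [hdecomp] at this
      linarith [hopt', hinn ▸ hprod]
    linarith
  refine ⟨main, ?_⟩
  intro ε hε hΔle z hz
  have hLR : (0:ℝ) ≤ L * R := mul_nonneg hL.le hR0
  have hMLR : (0:ℝ) < M + L * R := by linarith
  have h1 : Δ * (M + L * R) ≤ ε - R * |gradient f x i| := (le_div_iff₀ hMLR).mp hΔle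
  have h2 := main z hz
  nlinarith
end

section
/- Let f : ℝᵐ → ℝ be bounded below and g : ℝᵐ → ℝⁿ. Define the dual function φ(y) = inf_{x ∈ ℝᵐ} ( f(x) + ⟨y, g(x)⟩ ) for y ∈ ℝⁿ with y ≥ 0 componentwise. Suppose there is a Slater point x₀ with g_k(x₀) < 0 for all k = 1, …, n, and set γ = min_k ( −g_k(x₀) ) > 0. If y_* ≥ 0 satisfies φ(y_*) ≥ φ(y) for all y ≥ 0 (in particular φ(y_*) ≥ φ(0) = inf_x f(x)), then ‖y_*‖₁ ≤ (1/γ)·( f(x₀) − inf_{x ∈ ℝᵐ} f(x) ). -/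
/-- bound on the ℓ₁-norm of an optimal dual multiplier under the
Slater condition: `‖y_*‖₁ ≤ (1/γ)·(f(x₀) − inf f)`, where
`γ = min_k (−g_k(x₀)) > 0` and `φ(y) = inf_x (f(x) + ⟨y, g(x)⟩)` (computed in `EReal`). -/
theorem dual_multiplier_l1_bound
    (m n : ℕ)
    (f : (Fin m → ℝ) → ℝ) (hbdd : BddBelow (Set.range f))
    (g : (Fin m → ℝ) → Fin n → ℝ)
    (x₀ : Fin m → ℝ) (hx₀ : ∀ k, g x₀ k < 0)
    (γ : ℝ) (hγ : IsLeast (Set.range fun k => -g x₀ k) γ) (hγpos : 0 < γ)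
    (ystar : Fin n → ℝ) (hys : ∀ k, 0 ≤ ystar k)
    (hopt : ∀ y : Fin n → ℝ, (∀ k, 0 ≤ y k) →
      (⨅ x : Fin m → ℝ, ((f x + ∑ k, y k * g x k : ℝ) : EReal)) ≤
        ⨅ x : Fin m → ℝ, ((f x + ∑ k, ystar k * g x k : ℝ) : EReal)) :
    ∑ k, |ystar k| ≤ 1 / γ * (f x₀ - sInf (Set.range f)) := by
  set c : ℝ := f x₀ + ∑ k, ystar k * g x₀ k with hc
  have h1 : ((sInf (Set.range f) : ℝ) : EReal) ≤ (c : EReal) := by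
    calc ((sInf (Set.range f) : ℝ) : EReal)
        ≤ ⨅ x : Fin m → ℝ, ((f x : ℝ) : EReal) :=
          le_iInf fun x => EReal.coe_le_coe_iff.2 (csInf_le hbdd ⟨x, rfl⟩)
      _ = ⨅ x : Fin m → ℝ, ((f x + ∑ k, (0 : Fin n → ℝ) k * g x k : ℝ) : EReal) := by
          simp
      _ ≤ ⨅ x : Fin m → ℝ, ((f x + ∑ k, ystar k * g x k : ℝ) : EReal) :=
          hopt 0 (fun k => le_refl 0)
      _ ≤ (c : EReal) := iInf_le _ x₀
  have hreal : sInf (Set.range f) ≤ c := EReal.coe_le_coe_iff.1 h1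
  have habs : ∑ k, |ystar k| = ∑ k, ystar k :=
    Finset.sum_congr rfl fun k _ => abs_of_nonneg (hys k)
  have hsum : γ * ∑ k, ystar k ≤ -(∑ k, ystar k * g x₀ k) := by
    rw [Finset.mul_sum, ← Finset.sum_neg_distrib]
    refine Finset.sum_le_sum fun k _ => ?_
    have := hγ.2 ⟨k, rfl⟩
    calc γ * ystar k ≤ (-g x₀ k) * ystar k :=
          mul_le_mul_of_nonneg_right this (hys k)
      _ = -(ystar k * g x₀ k) := by ring
  have hkey : γ * ∑ k, ystar k ≤ f x₀ - sInf (Set.range f) := by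
    have : -(∑ k, ystar k * g x₀ k) ≤ f x₀ - sInf (Set.range f) := by
      rw [hc] at hreal; linarith
    linarith
  rw [habs]
  rw [div_mul_eq_mul_div, one_mul, le_div_iff₀ hγpos]
  linarith [hkey]
end

section
/- Let Q_x ⊆ ℝⁿ and Q_y ⊆ ℝᵐ be convex sets, and let F : Q_x × Q_y → ℝ be convex in x for each y and μ_y-strongly concave in y for each x, differentiable, and satisfy for all x, x′ ∈ Q_x and y, y′ ∈ Q_y: ‖∇_x F(x, y) − ∇_x F(x′, y)‖ ≤ L_{xx}‖x − x′‖, ‖∇_x F(x, y) − ∇_x F(x, y′)‖ ≤ L_{xy}‖y − y′‖, and ‖∇_y F(x, y) − ∇_y F(x′, y)‖ ≤ L_{xy}‖x − x′‖. Define s(x) = max_{y ∈ Q_y} F(x, y) and L = L_{xx} + 2L_{xy}²/μ_y. If z ∈ Q_x and ỹ(z) ∈ Q_y satisfies s(z) − F(z, ỹ(z)) ≤ ε_y, then for all x ∈ Q_x: 0 ≤ s(x) − F(z, ỹ(z)) − ⟨∇_x F(z, ỹ(z)), x − z⟩ ≤ L‖x − z‖² + 2ε_y. -/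
open RealInnerProductSpace Set Filter Topology

lemma grad_ineq_of_convexOn {E : Type*} [NormedAddCommGroup E] [InnerProductSpace ℝ E] [CompleteSpace E]
    {Q : Set E} {f : E → ℝ} {g z x : E}
    (hf : ConvexOn ℝ Q f) (hg : HasGradientAt f g z) (hz : z ∈ Q) (hx : x ∈ Q) :
    f z + ⟪g, x - z⟫ ≤ f x := by
  set d := x - z with hd
  have hc : HasDerivAt (fun t : ℝ => z + t • d) d 0 := by
    simpa using ((hasDerivAt_id (0:ℝ)).smul_const d).const_add z
  have h0 : z + (0:ℝ) • d = z := by simp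
  have hφ : HasDerivAt (fun t : ℝ => f (z + t • d)) ⟪g, d⟫ 0 := by
    have hfd : HasFDerivAt f (InnerProductSpace.toDual ℝ E g) (z + (0:ℝ) • d) := by
      rw [h0]; exact hg.hasFDerivAt
    have h := hfd.comp_hasDerivAt 0 hc
    simp at h
    exact h
  rw [hasDerivAt_iff_tendsto_slope] at hφ
  have htend : Tendsto (slope (fun t : ℝ => f (z + t • d)) 0) (𝓝[>] 0) (𝓝 ⟪g, d⟫) :=
    hφ.mono_left (nhdsWithin_mono _ fun t ht => ne_of_gt ht)
  have hbound : ∀ t ∈ Ioo (0:ℝ) 1,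
      slope (fun t : ℝ => f (z + t • d)) 0 t ≤ f x - f z := by
    intro t ht
    have hcomb := hf.2 hz hx (show (0:ℝ) ≤ 1 - t by linarith [ht.2]) ht.1.le (by ring)
    have heq : (1 - t) • z + t • x = z + t • d := by rw [hd]; module
    rw [heq] at hcomb
    have : f (z + t • d) ≤ (1 - t) * f z + t * f x := by simpa using hcomb
    rw [slope_def_field, div_le_iff₀ (by simpa using ht.1 : (0:ℝ) < t - 0)]
    simp only [h0, sub_zero]
    nlinarith
  have : ⟪g, d⟫ ≤ f x - f z :=
    le_of_tendsto htend (mem_of_superset (Ioo_mem_nhdsGT one_pos) hbound)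
  linarith

lemma strongConcave_max_ineq {E : Type*} [NormedAddCommGroup E] [InnerProductSpace ℝ E]
    {Q : Set E} {f : E → ℝ} {μ : ℝ}
    (hf : StrongConcaveOn Q μ f) {v : E} (hv : v ∈ Q) (hmax : ∀ y ∈ Q, f y ≤ f v)
    {y : E} (hy : y ∈ Q) : f y + μ / 2 * ‖y - v‖ ^ 2 ≤ f v := by
  have key : ∀ a ∈ Ioo (0:ℝ) 1, f y + μ / 2 * (1 - a) * ‖y - v‖ ^ 2 ≤ f v := by
    intro a ha
    have hb : (0:ℝ) ≤ 1 - a := by linarith [ha.2]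
    have h2 := hf.2 hy hv ha.1.le hb (by ring)
    have h3 : f (a • y + (1 - a) • v) ≤ f v := hmax _ (hf.1 hy hv ha.1.le hb (by ring))
    simp only [smul_eq_mul] at h2
    nlinarith [ha.1, sq_nonneg ‖y - v‖]
  have htend : Tendsto (fun a : ℝ => f y + μ / 2 * (1 - a) * ‖y - v‖ ^ 2) (𝓝[>] 0)
      (𝓝 (f y + μ / 2 * ‖y - v‖ ^ 2)) := by
    have hcont : Continuous (fun a : ℝ => f y + μ / 2 * (1 - a) * ‖y - v‖ ^ 2) := by
      continuity
    have := (hcont.tendsto 0).mono_left (nhdsWithin_le_nhds (s := Ioi (0:ℝ)))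
    simpa using this
  exact le_of_tendsto htend (mem_of_superset (Ioo_mem_nhdsGT one_pos) key)


set_option maxHeartbeats 1000000 in
/-- (δ, L)-model property for the max-function
`s(x) = max_{y ∈ Q_y} F(x, y)`.  If `ỹ(z)` is an `ε_y`-accurate solution of the
inner maximization at `z`, then for all `x ∈ Q_x`:
`0 ≤ s(x) − F(z, ỹ(z)) − ⟨∇_x F(z, ỹ(z)), x − z⟩ ≤ L‖x − z‖² + 2ε_y`,
with `L = L_{xx} + 2L_{xy}²/μ_y`. -/
theorem max_function_inexact_model
    (n m : ℕ) (μy Lxx Lxy εy : ℝ) (hμ : 0 < μy) (hεy : 0 ≤ εy)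
    (Qx : Set (EuclideanSpace ℝ (Fin n))) (Qy : Set (EuclideanSpace ℝ (Fin m)))
    (hQx : Convex ℝ Qx) (hQy : Convex ℝ Qy)
    (F : EuclideanSpace ℝ (Fin n) → EuclideanSpace ℝ (Fin m) → ℝ)
    (hconvx : ∀ y ∈ Qy, ConvexOn ℝ Qx (fun x => F x y))
    (hconcy : ∀ x ∈ Qx, ConvexOn ℝ Qy (fun y => -F x y - μy / 2 * ‖y‖ ^ 2))
    (Gx : EuclideanSpace ℝ (Fin n) → EuclideanSpace ℝ (Fin m) →
      EuclideanSpace ℝ (Fin n))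
    (Gy : EuclideanSpace ℝ (Fin n) → EuclideanSpace ℝ (Fin m) →
      EuclideanSpace ℝ (Fin m))
    (hGx : ∀ x ∈ Qx, ∀ y ∈ Qy, HasGradientAt (fun x' => F x' y) (Gx x y) x)
    (hGy : ∀ x ∈ Qx, ∀ y ∈ Qy, HasGradientAt (fun y' => F x y') (Gy x y) y)
    (hxx : ∀ x ∈ Qx, ∀ x' ∈ Qx, ∀ y ∈ Qy, ‖Gx x y - Gx x' y‖ ≤ Lxx * ‖x - x'‖)
    (hxy : ∀ x ∈ Qx, ∀ y ∈ Qy, ∀ y' ∈ Qy, ‖Gx x y - Gx x y'‖ ≤ Lxy * ‖y - y'‖)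
    (hyx : ∀ x ∈ Qx, ∀ x' ∈ Qx, ∀ y ∈ Qy, ‖Gy x y - Gy x' y‖ ≤ Lxy * ‖x - x'‖)
    (s : EuclideanSpace ℝ (Fin n) → ℝ)
    (hs : ∀ x ∈ Qx, IsGreatest ((F x) '' Qy) (s x))
    (z : EuclideanSpace ℝ (Fin n)) (hz : z ∈ Qx)
    (yt : EuclideanSpace ℝ (Fin m)) (hyt : yt ∈ Qy)
    (hacc : s z - F z yt ≤ εy) :
    ∀ x ∈ Qx,
      0 ≤ s x - F z yt - ⟪Gx z yt, x - z⟫ ∧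
        s x - F z yt - ⟪Gx z yt, x - z⟫ ≤
          (Lxx + 2 * Lxy ^ 2 / μy) * ‖x - z‖ ^ 2 + 2 * εy := by
  intro x hx
  obtain ⟨p, hp, hFp⟩ := (hs x hx).1
  obtain ⟨q, hq, hFq⟩ := (hs z hz).1
  have hsx_ub : ∀ y ∈ Qy, F x y ≤ s x := fun y hy => (hs x hx).2 ⟨y, hy, rfl⟩
  have hsz_ub : ∀ y ∈ Qy, F z y ≤ s z := fun y hy => (hs z hz).2 ⟨y, hy, rfl⟩
  have hsc : ∀ w ∈ Qx, StrongConcaveOn Qy μy (F w) := by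
    intro w hw
    rw [strongConcaveOn_iff_convex]
    have h := (hconcy w hw).neg
    have heq : (-(fun y => -F w y - μy / 2 * ‖y‖ ^ 2) : EuclideanSpace ℝ (Fin m) → ℝ)
        = fun y => F w y + μy / 2 * ‖y‖ ^ 2 := by
      funext y; simp only [Pi.neg_apply]; ring
    rwa [heq] at h
  have hlow : F z yt + ⟪Gx z yt, x - z⟫ ≤ F x yt :=
    grad_ineq_of_convexOn (hconvx yt hyt) (hGx z hz yt hyt) hz hx
  have hFxyt : F x yt ≤ s x := hsx_ub yt hyt
  refine ⟨by linarith, ?_⟩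
  by_cases hxz : x = z
  · subst hxz
    simp only [sub_self, inner_zero_right, norm_zero]
    nlinarith
  · have hnorm_pos : 0 < ‖x - z‖ := by
      rw [norm_pos_iff]; exact sub_ne_zero.mpr hxz
    have hLxy0 : 0 ≤ Lxy := by
      have h := (norm_nonneg (Gy x yt - Gy z yt)).trans (hyx x hx z hz yt hyt)
      by_contra hneg; push_neg at hneg; nlinarith
    have hLxx0 : 0 ≤ Lxx := by
      have h := (norm_nonneg (Gx x yt - Gx z yt)).trans (hxx x hx z hz yt hyt)
      by_contra hneg; push_neg at hneg; nlinarith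
    -- T1 : smoothness in x along the segment [z, x]
    have hSsub : segment ℝ z x ⊆ Qx := hQx.segment_subset hz hx
    have hSnorm : ∀ u ∈ segment ℝ z x, ‖u - z‖ ≤ ‖x - z‖ := by
      rintro u ⟨a, b, ha, hb, hab, rfl⟩
      have heq : a • z + b • x - z = b • (x - z) := by
        have : a = 1 - b := by linarith
        rw [this]; module
      rw [heq, norm_smul, Real.norm_eq_abs, abs_of_nonneg hb]
      nlinarith [norm_nonneg (x - z)]
    have hder1 : ∀ u ∈ segment ℝ z x,
        HasFDerivWithinAt (fun u => F u p - (InnerProductSpace.toDual ℝ _ (Gx z p)) u)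
          (InnerProductSpace.toDual ℝ _ (Gx u p) - InnerProductSpace.toDual ℝ _ (Gx z p))
          (segment ℝ z x) u := by
      intro u hu
      exact (((hGx u (hSsub hu) p hp).hasFDerivAt).sub
        ((InnerProductSpace.toDual ℝ _ (Gx z p)).hasFDerivAt)).hasFDerivWithinAt
    have hbound1 : ∀ u ∈ segment ℝ z x,
        ‖InnerProductSpace.toDual ℝ _ (Gx u p) - InnerProductSpace.toDual ℝ _ (Gx z p)‖
          ≤ Lxx * ‖x - z‖ := by
      intro u hu
      rw [← map_sub, (InnerProductSpace.toDual ℝ _).norm_map]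
      calc ‖Gx u p - Gx z p‖ ≤ Lxx * ‖u - z‖ := hxx u (hSsub hu) z hz p hp
        _ ≤ Lxx * ‖x - z‖ := mul_le_mul_of_nonneg_left (hSnorm u hu) hLxx0
    have hT1' := (convex_segment z x).norm_image_sub_le_of_norm_hasFDerivWithin_le
      hder1 hbound1 (left_mem_segment ℝ z x) (right_mem_segment ℝ z x)
    have he1 : (F x p - (InnerProductSpace.toDual ℝ _ (Gx z p)) x)
        - (F z p - (InnerProductSpace.toDual ℝ _ (Gx z p)) z)
        = F x p - F z p - ⟪Gx z p, x - z⟫ := by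
      simp only [InnerProductSpace.toDual_apply_apply, inner_sub_right]; ring
    have hT1 : F x p - F z p - ⟪Gx z p, x - z⟫ ≤ Lxx * ‖x - z‖ ^ 2 := by
      have h2 : F x p - F z p - ⟪Gx z p, x - z⟫ ≤ Lxx * ‖x - z‖ * ‖x - z‖ := by
        rw [← he1]
        exact (le_abs_self _).trans (by simpa [Real.norm_eq_abs] using hT1')
      nlinarith
    -- Lipschitz bound for y ↦ F x y - F z y on Qy
    have hder2 : ∀ u ∈ Qy, HasFDerivWithinAt (fun y => F x y - F z y)
        (InnerProductSpace.toDual ℝ _ (Gy x u) - InnerProductSpace.toDual ℝ _ (Gy z u)) Qy u := by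
      intro u hu
      exact (((hGy x hx u hu).hasFDerivAt).sub ((hGy z hz u hu).hasFDerivAt)).hasFDerivWithinAt
    have hbound2 : ∀ u ∈ Qy,
        ‖InnerProductSpace.toDual ℝ _ (Gy x u) - InnerProductSpace.toDual ℝ _ (Gy z u)‖
          ≤ Lxy * ‖x - z‖ := by
      intro u hu
      rw [← map_sub, (InnerProductSpace.toDual ℝ _).norm_map]
      exact hyx x hx z hz u hu
    have hT2' := hQy.norm_image_sub_le_of_norm_hasFDerivWithin_le hder2 hbound2 hq hp
    have habs : (F x p - F z p) - (F x q - F z q) ≤ Lxy * ‖x - z‖ * ‖p - q‖ :=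
      (le_abs_self _).trans (by simpa [Real.norm_eq_abs] using hT2')
    -- strong concavity facts
    have hmaxz : ∀ y ∈ Qy, F z y ≤ F z q := fun y hy => (hsz_ub y hy).trans_eq hFq.symm
    have hmaxx : ∀ y ∈ Qy, F x y ≤ F x p := fun y hy => (hsx_ub y hy).trans_eq hFp.symm
    have hA1 : F z p + μy / 2 * ‖p - q‖ ^ 2 ≤ F z q :=
      strongConcave_max_ineq (hsc z hz) hq hmaxz hp
    have hA2 : F z yt + μy / 2 * ‖yt - q‖ ^ 2 ≤ F z q :=
      strongConcave_max_ineq (hsc z hz) hq hmaxz hyt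
    have hA3 : F x q + μy / 2 * ‖q - p‖ ^ 2 ≤ F x p :=
      strongConcave_max_ineq (hsc x hx) hp hmaxx hq
    have hnqp : ‖q - p‖ = ‖p - q‖ := norm_sub_rev _ _
    rw [hnqp] at hA3
    have hpq : μy * ‖p - q‖ ≤ Lxy * ‖x - z‖ := by
      rcases eq_or_lt_of_le (norm_nonneg (p - q)) with h0 | h0
      · rw [← h0, mul_zero]; positivity
      · nlinarith [hA1, hA3, habs, h0]
    -- inner product term
    have hptr : ‖p - yt‖ ≤ ‖p - q‖ + ‖q - yt‖ := norm_sub_le_norm_sub_add_norm_sub p q yt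
    have hinner : ⟪Gx z p - Gx z yt, x - z⟫ ≤
        Lxy * ‖p - q‖ * ‖x - z‖ + Lxy * ‖q - yt‖ * ‖x - z‖ := by
      calc ⟪Gx z p - Gx z yt, x - z⟫ ≤ ‖Gx z p - Gx z yt‖ * ‖x - z‖ :=
            real_inner_le_norm _ _
        _ ≤ (Lxy * ‖p - yt‖) * ‖x - z‖ :=
            mul_le_mul_of_nonneg_right (hxy z hz p hp yt hyt) (norm_nonneg _)
        _ ≤ Lxy * ‖p - q‖ * ‖x - z‖ + Lxy * ‖q - yt‖ * ‖x - z‖ :=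
            (mul_le_mul_of_nonneg_right (mul_le_mul_of_nonneg_left hptr hLxy0)
              (norm_nonneg _)).trans_eq (by ring)
    have hdecomp : s x - F z yt - ⟪Gx z yt, x - z⟫ =
        (F x p - F z p - ⟪Gx z p, x - z⟫) + (F z p - F z yt) +
          ⟪Gx z p - Gx z yt, x - z⟫ := by
      rw [← hFp, inner_sub_left]; ring
    have hFzp : F z p ≤ F z yt + εy := by
      have := hmaxz p hp; rw [hFq] at this; linarith
    have hyt2 : μy / 2 * ‖yt - q‖ ^ 2 ≤ εy := by
      rw [hFq] at hA2; linarith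
    have hqyt : ‖q - yt‖ = ‖yt - q‖ := norm_sub_rev _ _
    -- the two square-completion estimates
    have e1 : Lxy * ‖p - q‖ * ‖x - z‖ ≤ Lxy ^ 2 / μy * ‖x - z‖ ^ 2 := by
      rw [div_mul_eq_mul_div, le_div_iff₀ hμ]
      have h := mul_le_mul_of_nonneg_left hpq (mul_nonneg hLxy0 (norm_nonneg (x - z)))
      linarith only [h]
    have e2 : Lxy * ‖q - yt‖ * ‖x - z‖ ≤ Lxy ^ 2 / μy * ‖x - z‖ ^ 2 + εy := by
      rw [hqyt]
      have hsq := sq_nonneg (2 * (Lxy * ‖x - z‖) - μy * ‖yt - q‖)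
      have hm := mul_le_mul_of_nonneg_left hyt2 hμ.le
      rw [← sub_le_iff_le_add, div_mul_eq_mul_div, le_div_iff₀ hμ]
      nlinarith [hsq, hm]
    rw [hdecomp]
    have hfin : (Lxx + 2 * Lxy ^ 2 / μy) * ‖x - z‖ ^ 2 =
        Lxx * ‖x - z‖ ^ 2 + Lxy ^ 2 / μy * ‖x - z‖ ^ 2 + Lxy ^ 2 / μy * ‖x - z‖ ^ 2 := by
      ring
    rw [hfin]
    linarith only [hT1, hFzp, hinner, e1, e2, hεy]
end
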